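/- Let T be a bounded linear operator on a Banach space such that the series ∑_{n=1}^∞ T^n(I-T)/n converges in operator norm. Then ‖T^n‖/n → 0. -/
import Mathlib

open Filter Topology

/-- If `∑_{n=1}^∞ T^n (I - T) / n` converges in operator norm, then `‖T^n‖/n → 0`. -/
theorem norm_pow_div_tendsto_zero_of_series_converges {𝕜 : Type*} [RCLike 𝕜]
    {X : Type*} [NormedAddCommGroup X] [NormedSpace 𝕜 X] [CompleteSpace X]
    (T : X →L[𝕜] X)
    (h : ∃ S : X →L[𝕜] X,
      Tendsto (fun N : ℕ => ∑ n ∈ Finset.Icc 1 N, (n : 𝕜)⁻¹ • (T ^ n * (1 - T)))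
        atTop (𝓝 S)) :
    Tendsto (fun n : ℕ => ‖T ^ n‖ / (n : ℝ)) atTop (𝓝 0) := by
  obtain ⟨S, hS⟩ := h
  set s : ℕ → (X →L[𝕜] X) :=
    fun N => ∑ n ∈ Finset.Icc 1 N, (n : 𝕜)⁻¹ • (T ^ n * (1 - T)) with hs
  have hcauchy : CauchySeq s := hS.cauchySeq
  rw [Metric.tendsto_atTop]
  intro ε hε
  obtain ⟨m, hm⟩ := Metric.cauchySeq_iff'.mp hcauchy (ε/4) (by linarith)
  have hmnorm : ∀ n, m ≤ n → ‖s n - s m‖ < ε/4 := by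
    intro n hn
    have := hm n hn
    rwa [dist_eq_norm] at this
  have key : ∀ N, m ≤ N → T ^ (m+1) - T ^ (N+1) =
      ((N+1 : ℕ) : 𝕜) • (s N - s m) - ∑ n ∈ Finset.Icc (m+1) N, (s n - s m) := by
    intro N hN
    induction N, hN using Nat.le_induction with
    | base => simp
    | succ N hN ih =>
      have hstep : s (N+1) - s N = ((N+1 : ℕ) : 𝕜)⁻¹ • (T ^ (N+1) * (1 - T)) := by
        rw [hs]
        simp only
        rw [Finset.sum_Icc_succ_top (by omega)]
        abel
      have hmulstep : T ^ (N+1) - T ^ (N+1+1) = ((N+1 : ℕ) : 𝕜) • (s (N+1) - s N) := by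
        rw [hstep, smul_smul, mul_inv_cancel₀ (by exact_mod_cast Nat.succ_ne_zero N), one_smul,
          mul_sub, mul_one, ← pow_succ]
      have hIcc : Finset.Icc (m+1) (N+1) = insert (N+1) (Finset.Icc (m+1) N) := by
        ext x; simp; omega
      rw [hIcc, Finset.sum_insert (by simp)]
      have h1 : T ^ (m+1) - T ^ (N+1+1) = (T ^ (m+1) - T ^ (N+1)) + (T ^ (N+1) - T ^ (N+1+1)) := by
        abel
      rw [h1, ih, hmulstep]
      have hc : ((N+1+1 : ℕ) : 𝕜) = ((N+1 : ℕ) : 𝕜) + 1 := by push_cast; ring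
      rw [hc]
      module
  -- norm bound
  have hbound : ∀ N, m ≤ N → ‖T ^ (N+1)‖ ≤ ‖T ^ (m+1)‖ + 2 * (N+1) * (ε/4) := by
    intro N hN
    have hk := key N hN
    have : T ^ (N+1) = T ^ (m+1) -
        (((N+1 : ℕ) : 𝕜) • (s N - s m) - ∑ n ∈ Finset.Icc (m+1) N, (s n - s m)) := by
      rw [← hk]; abel
    rw [this]
    have hsum : ‖∑ n ∈ Finset.Icc (m+1) N, (s n - s m)‖ ≤ (N : ℝ) * (ε/4) := by
      calc ‖∑ n ∈ Finset.Icc (m+1) N, (s n - s m)‖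
          ≤ ∑ n ∈ Finset.Icc (m+1) N, ‖s n - s m‖ := norm_sum_le _ _
        _ ≤ ∑ n ∈ Finset.Icc (m+1) N, (ε/4) := by
            apply Finset.sum_le_sum
            intro i hi
            exact le_of_lt (hmnorm i (by simp at hi; omega))
        _ = (Finset.Icc (m+1) N).card * (ε/4) := by rw [Finset.sum_const, nsmul_eq_mul]
        _ ≤ (N : ℝ) * (ε/4) := by
            apply mul_le_mul_of_nonneg_right _ (by linarith)
            rw [Nat.card_Icc]
            have : N + 1 - (m+1) ≤ N := by omega
            exact_mod_cast this
    have hfirst : ‖((N+1 : ℕ) : 𝕜) • (s N - s m)‖ ≤ ((N:ℝ)+1) * (ε/4) := by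
      have hle : ‖((N+1 : ℕ) : 𝕜) • (s N - s m)‖ ≤ ‖((N+1 : ℕ) : 𝕜)‖ * ‖s N - s m‖ :=
        ContinuousLinearMap.opNorm_smul_le _ _
      refine le_trans hle ?_
      have h1 : ‖((N+1 : ℕ) : 𝕜)‖ = (N : ℝ) + 1 := by
        rw [RCLike.norm_natCast]; push_cast; ring
      rw [h1]
      exact mul_le_mul_of_nonneg_left (le_of_lt (hmnorm N hN)) (by positivity)
    calc ‖T ^ (m+1) - (((N+1 : ℕ) : 𝕜) • (s N - s m) - ∑ n ∈ Finset.Icc (m+1) N, (s n - s m))‖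
        ≤ ‖T ^ (m+1)‖ + ‖((N+1 : ℕ) : 𝕜) • (s N - s m) - ∑ n ∈ Finset.Icc (m+1) N, (s n - s m)‖ :=
          norm_sub_le _ _
      _ ≤ ‖T ^ (m+1)‖ + (‖((N+1 : ℕ) : 𝕜) • (s N - s m)‖ + ‖∑ n ∈ Finset.Icc (m+1) N, (s n - s m)‖) := by
          gcongr; exact norm_sub_le _ _
      _ ≤ ‖T ^ (m+1)‖ + (((N:ℝ)+1) * (ε/4) + (N : ℝ) * (ε/4)) := by gcongr
      _ ≤ ‖T ^ (m+1)‖ + 2 * (N+1) * (ε/4) := by nlinarith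
  -- conclude
  obtain ⟨M, hM⟩ := exists_nat_gt (‖T ^ (m+1)‖ / (ε/4))
  refine ⟨max (m+1) (M+1), fun n hn => ?_⟩
  have hn1 : m + 1 ≤ n := le_trans (le_max_left _ _) hn
  have hnM : M + 1 ≤ n := le_trans (le_max_right _ _) hn
  obtain ⟨N, rfl⟩ : ∃ N, n = N + 1 := ⟨n - 1, by omega⟩
  have hNm : m ≤ N := by omega
  have hb := hbound N hNm
  have hpos : (0 : ℝ) < (N : ℝ) + 1 := by positivity
  rw [Real.dist_eq, sub_zero, abs_of_nonneg (by positivity)]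
  have hcast : ((N+1 : ℕ) : ℝ) = (N : ℝ) + 1 := by push_cast; ring
  rw [hcast]
  rw [div_lt_iff₀ hpos]
  have hTm : ‖T ^ (m+1)‖ < ((N:ℝ)+1) * (ε/4) := by
    have hMn : (M : ℝ) < (N : ℝ) + 1 := by exact_mod_cast Nat.lt_of_lt_of_le (Nat.lt_succ_self M) hnM
    have : ‖T ^ (m+1)‖ / (ε/4) < (N:ℝ)+1 := lt_trans hM hMn
    rw [div_lt_iff₀ (by linarith)] at this
    linarith
  nlinarith
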